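/- Let F be a fixed connected graph on f ≥ 2 vertices and let k ≥ f satisfy k ≢ 0 and k ≢ 1 (mod f). Then Σ_G (−1)^{#E(G)} = 0, where the sum ranges over all graphs G on the labeled vertex set {1,…,k} containing at least one connected component isomorphic to F. -/

import Mathlib

open scoped Classical

/-- `G` contains a connected component (an isolated subgraph) isomorphic to `F`: there is a
vertex set `s` closed under adjacency whose induced subgraph is isomorphic to `F`. -/
def hasIsoComponent {V α : Type} (G : SimpleGraph V) (F : SimpleGraph α) : Prop :=
  ∃ s : Finset V, (∀ u ∈ s, ∀ v : V, G.Adj u v → v ∈ s) ∧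
    Nonempty (G.induce ↑s ≃g F)

section Aux

open Finset SimpleGraph

variable {V : Type} {f : ℕ}

/-- `s` is an isolated copy of `F` in `G`. -/
def isFComp (F : SimpleGraph (Fin f)) (G : SimpleGraph V) (s : Finset V) : Prop :=
  (∀ u ∈ s, ∀ v : V, G.Adj u v → v ∈ s) ∧ Nonempty (G.induce ↑s ≃g F)

/-- Flip the edge between `a` and `b`. -/
def edgeFlip (a b : V) (hab : a ≠ b) (G : SimpleGraph V) : SimpleGraph V where
  Adj u v := (G.Adj u v ∧ ¬((u = a ∧ v = b) ∨ (u = b ∧ v = a))) ∨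
    (((u = a ∧ v = b) ∨ (u = b ∧ v = a)) ∧ ¬G.Adj u v)
  symm := by
    constructor
    intro u v h
    have h1 := G.adj_comm u v
    tauto
  loopless := by
    constructor
    intro u h
    have h2 := G.loopless.irrefl u
    rcases h with ⟨h, -⟩ | ⟨h, -⟩
    · exact h2 h
    · rcases h with ⟨h3, h4⟩ | ⟨h3, h4⟩ <;> exact hab (h3 ▸ h4 ▸ rfl)

lemma edgeFlip_adj (a b : V) (hab : a ≠ b) (G : SimpleGraph V) (u v : V) :
    (edgeFlip a b hab G).Adj u v ↔ (G.Adj u v ∧ ¬((u = a ∧ v = b) ∨ (u = b ∧ v = a))) ∨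
      (((u = a ∧ v = b) ∨ (u = b ∧ v = a)) ∧ ¬G.Adj u v) := Iff.rfl

lemma edgeFlip_involutive (a b : V) (hab : a ≠ b) (G : SimpleGraph V) :
    edgeFlip a b hab (edgeFlip a b hab G) = G := by
  ext u v
  rw [edgeFlip_adj, edgeFlip_adj]
  tauto

lemma edgeFlip_ne (a b : V) (hab : a ≠ b) (G : SimpleGraph V) :
    edgeFlip a b hab G ≠ G := by
  intro h
  have h1 : (edgeFlip a b hab G).Adj a b ↔ ¬ G.Adj a b := by
    rw [edgeFlip_adj]; tauto
  rw [h] at h1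
  tauto

lemma edgeFlip_edgeFinset [Fintype V] [DecidableEq V] (a b : V) (hab : a ≠ b)
    (G : SimpleGraph V) :
    (edgeFlip a b hab G).edgeFinset =
      if G.Adj a b then G.edgeFinset.erase s(a, b) else insert s(a, b) G.edgeFinset := by
  ext e
  by_cases he : e = s(a, b)
  · subst he
    by_cases hG : G.Adj a b <;>
      simp [hG, SimpleGraph.mem_edgeFinset, edgeFlip_adj, hab]
  · have he' : ∀ u v : V, e = s(u, v) → ¬((u = a ∧ v = b) ∨ (u = b ∧ v = a)) := by
      rintro u v rfl (⟨rfl, rfl⟩ | ⟨rfl, rfl⟩)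
      · exact he rfl
      · exact he (Sym2.eq_swap)
    induction e with
    | h u v =>
      have hne := he' u v rfl
      by_cases hG : G.Adj a b <;>
        simp [hG, SimpleGraph.mem_edgeFinset, edgeFlip_adj, hne, he]

lemma edgeFlip_sign [Fintype V] [DecidableEq V] (a b : V) (hab : a ≠ b)
    (G : SimpleGraph V) :
    ((-1 : ℤ)) ^ (edgeFlip a b hab G).edgeFinset.card = -((-1 : ℤ)) ^ G.edgeFinset.card := by
  rw [edgeFlip_edgeFinset a b hab G]
  by_cases hG : G.Adj a b
  · rw [if_pos hG]
    have hmem : s(a, b) ∈ G.edgeFinset := by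
      rw [SimpleGraph.mem_edgeFinset]; exact hG
    have hpos : 0 < G.edgeFinset.card := Finset.card_pos.mpr ⟨_, hmem⟩
    obtain ⟨n, hn⟩ := Nat.exists_eq_add_of_lt hpos
    rw [Finset.card_erase_of_mem hmem, hn]
    simp [pow_succ]
  · rw [if_neg hG]
    have hmem : s(a, b) ∉ G.edgeFinset := by
      rw [SimpleGraph.mem_edgeFinset]; exact hG
    rw [Finset.card_insert_of_notMem hmem, pow_succ]
    ring

lemma isFComp_card (F : SimpleGraph (Fin f)) (G : SimpleGraph V) {s : Finset V}
    (h : isFComp F G s) : s.card = f := by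
  obtain ⟨e⟩ := h.2
  simpa using Fintype.card_congr e.toEquiv

lemma walk_mem {G : SimpleGraph V} {s : Finset V}
    (hcl : ∀ u ∈ s, ∀ v : V, G.Adj u v → v ∈ s) :
    ∀ {x y : V}, G.Walk x y → x ∈ s → y ∈ s := by
  intro x y w
  induction w with
  | nil => exact id
  | cons h p ih => intro hx; exact ih (hcl _ hx _ h)

lemma isFComp_mem_iff (F : SimpleGraph (Fin f)) (hFconn : F.Connected) (G : SimpleGraph V)
    {s : Finset V} (h : isFComp F G s) {v : V} (hv : v ∈ s) :
    ∀ u, u ∈ s ↔ G.Reachable v u := by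
  intro u
  constructor
  · intro hu
    obtain ⟨e⟩ := h.2
    have hconn : (G.induce (↑s : Set V)).Connected := e.connected_iff.mpr hFconn
    have hr : (G.induce (↑s : Set V)).Reachable ⟨v, hv⟩ ⟨u, hu⟩ := hconn ⟨v, hv⟩ ⟨u, hu⟩
    exact hr.map (SimpleGraph.Embedding.induce (↑s : Set V)).toHom
  · intro hr
    obtain ⟨w⟩ := hr
    exact walk_mem h.1 w hv

lemma isFComp_eq_or_disjoint (F : SimpleGraph (Fin f)) (hFconn : F.Connected)
    (G : SimpleGraph V) {s t : Finset V} (hs : isFComp F G s) (ht : isFComp F G t)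
    (hst : s ≠ t) : Disjoint s t := by
  rw [Finset.disjoint_left]
  intro v hvs hvt
  apply hst
  ext u
  rw [isFComp_mem_iff F hFconn G hs hvs u, isFComp_mem_iff F hFconn G ht hvt u]

lemma edgeFlip_isFComp (F : SimpleGraph (Fin f)) (G : SimpleGraph V) {a b : V} (hab : a ≠ b)
    {s : Finset V} (ha : a ∉ s) (hb : b ∉ s) (h : isFComp F G s) :
    isFComp F (edgeFlip a b hab G) s := by
  constructor
  · intro u hu v hadj
    rw [edgeFlip_adj] at hadj
    rcases hadj with ⟨hGuv, -⟩ | ⟨hq, -⟩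
    · exact h.1 u hu v hGuv
    · rcases hq with ⟨h1, -⟩ | ⟨h1, -⟩
      · exact absurd (h1 ▸ hu) ha
      · exact absurd (h1 ▸ hu) hb
  · have heq : (edgeFlip a b hab G).induce (↑s : Set V) = G.induce (↑s : Set V) := by
      ext ⟨u, hu⟩ ⟨v, hv⟩
      have hu' : u ∈ s := hu
      have hv' : v ∈ s := hv
      show (edgeFlip a b hab G).Adj u v ↔ G.Adj u v
      rw [edgeFlip_adj]
      constructor
      · rintro (⟨h', -⟩ | ⟨⟨h1, -⟩ | ⟨h1, -⟩, -⟩)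
        · exact h'
        · exact absurd (h1 ▸ hu') ha
        · exact absurd (h1 ▸ hu') hb
      · intro h'
        left
        refine ⟨h', ?_⟩
        rintro (⟨h1, -⟩ | ⟨h1, -⟩)
        · exact ha (h1 ▸ hu')
        · exact hb (h1 ▸ hu')
    rw [heq]
    exact h.2


lemma inner_zero {k f : ℕ} (hf : 2 ≤ f) (F : SimpleGraph (Fin f)) (hFconn : F.Connected)
    (hk : f ≤ k) (h0 : k % f ≠ 0) (h1 : k % f ≠ 1)
    (T : Finset (Finset (Fin k))) (hT : T.Nonempty) :
    ∑ G ∈ Finset.univ.filter (fun G : SimpleGraph (Fin k) => ∀ s ∈ T, isFComp F G s),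
      ((-1 : ℤ)) ^ G.edgeFinset.card = 0 := by
  rcases (Finset.univ.filter
      (fun G : SimpleGraph (Fin k) => ∀ s ∈ T, isFComp F G s)).eq_empty_or_nonempty with
    hE | ⟨G0, hG0⟩
  · rw [hE, Finset.sum_empty]
  have hG0' : ∀ s ∈ T, isFComp F G0 s := (Finset.mem_filter.mp hG0).2
  set S : Finset (Fin k) := T.biUnion id with hS
  have hcard : S.card = T.card * f := by
    rw [hS, Finset.card_biUnion]
    · simp only [id_eq]
      rw [Finset.sum_congr rfl (fun s hs => isFComp_card F G0 (hG0' s hs))]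
      simp [mul_comm]
    · intro s hs t ht hst
      exact isFComp_eq_or_disjoint F hFconn G0 (hG0' s hs) (hG0' t ht) hst
  have hSle : S.card ≤ k := by simpa using Finset.card_le_univ S
  have hmod : k % f = (k - S.card) % f := by
    have hkk : (k - S.card) + T.card * f = k := by omega
    calc k % f = ((k - S.card) + T.card * f) % f := by rw [hkk]
      _ = (k - S.card) % f := Nat.add_mul_mod_self_right _ _ _
  have h2 : 2 ≤ k - S.card := by
    by_contra hlt
    push_neg at hlt
    interval_cases h : (k - S.card)
    · exact h0 (by simp [hmod])
    · exact h1 (by rw [hmod]; exact Nat.mod_eq_of_lt (by omega))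
  have hcompl : 1 < Sᶜ.card := by
    rw [Finset.card_compl]
    simp only [Fintype.card_fin]
    omega
  obtain ⟨a, ha, b, hb, hab⟩ := Finset.one_lt_card.mp hcompl
  have ha' : a ∉ S := Finset.mem_compl.mp ha
  have hb' : b ∉ S := Finset.mem_compl.mp hb
  have hnot : ∀ s ∈ T, a ∉ s ∧ b ∉ s := by
    intro s hs
    constructor
    · intro h; exact ha' (Finset.mem_biUnion.mpr ⟨s, hs, h⟩)
    · intro h; exact hb' (Finset.mem_biUnion.mpr ⟨s, hs, h⟩)
  refine Finset.sum_involution (fun G _ => edgeFlip a b hab G) ?_ ?_ ?_ ?_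
  · intro G _
    rw [edgeFlip_sign]
    ring
  · intro G _ _
    exact edgeFlip_ne a b hab G
  · intro G hG
    rw [Finset.mem_filter] at hG ⊢
    refine ⟨Finset.mem_univ _, ?_⟩
    intro s hs
    exact edgeFlip_isFComp F G hab (hnot s hs).1 (hnot s hs).2 (hG.2 s hs)
  · intro G _
    exact edgeFlip_involutive a b hab G

end Aux

/-- Let `F` be a connected graph on `f ≥ 2` vertices and `k ≥ f` with
`k % f ∉ {0,1}`. Then the alternating-by-edge-count sum over all graphs on the labeled vertex
set `{1,…,k}` having a connected component isomorphic to `F` vanishes. -/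
theorem stmt_17 (f : ℕ) (hf : 2 ≤ f) (F : SimpleGraph (Fin f)) (hFconn : F.Connected)
    (k : ℕ) (hk : f ≤ k) (h0 : k % f ≠ 0) (h1 : k % f ≠ 1) :
    ∑ G ∈ Finset.univ.filter (fun G : SimpleGraph (Fin k) => hasIsoComponent G F),
        ((-1 : ℤ)) ^ (Nat.card G.edgeSet) = 0 := by
  classical
  have hkey : ∀ G : SimpleGraph (Fin k), Nat.card G.edgeSet = G.edgeFinset.card := by
    intro G
    rw [Nat.card_eq_fintype_card, SimpleGraph.edgeFinset, Set.toFinset_card]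
  simp only [hkey]
  have hiff : ∀ G : SimpleGraph (Fin k), hasIsoComponent G F ↔
      (Finset.univ.filter (fun s : Finset (Fin k) => isFComp F G s)).Nonempty := by
    intro G
    constructor
    · rintro ⟨s, h1', h2'⟩
      exact ⟨s, Finset.mem_filter.mpr ⟨Finset.mem_univ _, h1', h2'⟩⟩
    · rintro ⟨s, hs⟩
      exact ⟨s, (Finset.mem_filter.mp hs).2.1, (Finset.mem_filter.mp hs).2.2⟩
  have step : ∀ G : SimpleGraph (Fin k),
      (if hasIsoComponent G F then ((-1 : ℤ)) ^ G.edgeFinset.card else 0) =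
      ∑ T ∈ (Finset.univ : Finset (Finset (Finset (Fin k)))),
        (if T.Nonempty ∧ ∀ s ∈ T, isFComp F G s
          then -((-1 : ℤ)) ^ G.edgeFinset.card * (-1) ^ T.card else 0) := by
    intro G
    rw [← Finset.sum_filter]
    have hfe : Finset.univ.filter
          (fun T : Finset (Finset (Fin k)) => T.Nonempty ∧ ∀ s ∈ T, isFComp F G s)
        = ((Finset.univ.filter (fun s : Finset (Fin k) => isFComp F G s)).powerset).erase ∅ := by
      ext T
      simp only [Finset.mem_filter, Finset.mem_univ, true_and, Finset.mem_erase,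
        Finset.mem_powerset, Finset.subset_iff, Finset.nonempty_iff_ne_empty]
    rw [hfe]
    have hsum : ∑ T ∈ ((Finset.univ.filter
          (fun s : Finset (Fin k) => isFComp F G s)).powerset).erase ∅, ((-1 : ℤ)) ^ T.card
        = (if (Finset.univ.filter (fun s : Finset (Fin k) => isFComp F G s)) = ∅
            then (1 : ℤ) else 0) - 1 := by
      have h := Finset.sum_powerset_neg_one_pow_card
        (x := Finset.univ.filter (fun s : Finset (Fin k) => isFComp F G s))
      rw [← Finset.add_sum_erase _ _ (Finset.empty_mem_powerset _)] at h
      simp only [Finset.card_empty, pow_zero] at h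
      linarith
    calc (if hasIsoComponent G F then ((-1 : ℤ)) ^ G.edgeFinset.card else 0)
        = -((-1 : ℤ)) ^ G.edgeFinset.card *
            (∑ T ∈ ((Finset.univ.filter
              (fun s : Finset (Fin k) => isFComp F G s)).powerset).erase ∅,
              ((-1 : ℤ)) ^ T.card) := by
          rw [hsum]
          by_cases hne : (Finset.univ.filter (fun s : Finset (Fin k) => isFComp F G s)) = ∅
          · rw [if_pos hne, if_neg]
            · ring
            · rw [hiff G, Finset.nonempty_iff_ne_empty]
              simp [hne]
          · rw [if_neg hne, if_pos]
            · ring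
            · rw [hiff G, Finset.nonempty_iff_ne_empty]
              exact hne
      _ = _ := by
          rw [Finset.mul_sum]
  rw [Finset.sum_filter]
  rw [Finset.sum_congr rfl (fun G _ => step G)]
  rw [Finset.sum_comm]
  apply Finset.sum_eq_zero
  intro T _
  rcases T.eq_empty_or_nonempty with rfl | hT
  · apply Finset.sum_eq_zero
    intro G _
    simp
  · simp only [hT, true_and]
    rw [← Finset.sum_filter]
    rw [Finset.sum_congr rfl
      (fun G _ => by ring :
        ∀ G ∈ Finset.univ.filter (fun G : SimpleGraph (Fin k) => ∀ s ∈ T, isFComp F G s),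
          -((-1 : ℤ)) ^ G.edgeFinset.card * (-1) ^ T.card
            = (-((-1 : ℤ)) ^ T.card) * ((-1 : ℤ)) ^ G.edgeFinset.card)]
    rw [← Finset.mul_sum, inner_zero hf F hFconn hk h0 h1 T hT, mul_zero]
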